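/- For every n ≥ m ≥ 1, the number of ordered m-forests of binary phylogenetic trees on a leaf set of size n (sequences (T_1,...,T_m) of binary phylogenetic trees on pairwise disjoint nonempty leaf sets whose union is the n-set) equals (2n−m−1)! · m / ((n−m)! · 2^{n−m}). -/

import Mathlib

/-- Rooted trees with natural-number-labeled leaves. -/
inductive PTree where
  | leaf : ℕ → PTree
  | node : List PTree → PTree

namespace PTree

/-- The list of leaf labels of a tree, in left-to-right order. -/
def leaves : PTree → List ℕ
  | .leaf i => [i]
  | .node ts => ts.attach.flatMap (fun t => leaves t.1)
decreasing_by have := List.sizeOf_lt_of_mem t.2; simp_wf; omega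

/-- The depth (number of arcs from the root) of the leaf labeled `i`. -/
def leafDepth : PTree → ℕ → ℕ
  | .leaf _, _ => 0
  | .node ts, i =>
      (ts.attach.map (fun t => if i ∈ leaves t.1 then 1 + leafDepth t.1 i else 0)).sum
decreasing_by have := List.sizeOf_lt_of_mem t.2; simp_wf; omega

/-- The cophenetic value of `i` and `j`: the depth of their lowest common ancestor. -/
def cophen : PTree → ℕ → ℕ → ℕ
  | .leaf _, _, _ => 0
  | .node ts, i, j =>
      (ts.attach.map (fun t =>
        if i ∈ leaves t.1 ∧ j ∈ leaves t.1 then 1 + cophen t.1 i j else 0)).sum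
decreasing_by have := List.sizeOf_lt_of_mem t.2; simp_wf; omega

/-- The nodal distance between the leaves labeled `i` and `j`:
the number of edges on the undirected path joining them. -/
def ndist : PTree → ℕ → ℕ → ℕ
  | .leaf _, _, _ => 0
  | .node ts, i, j =>
      (ts.attach.map (fun t =>
        if i ∈ leaves t.1 ∧ j ∈ leaves t.1 then ndist t.1 i j
        else if i ∈ leaves t.1 then 1 + leafDepth t.1 i
        else if j ∈ leaves t.1 then 1 + leafDepth t.1 j
        else 0)).sum
decreasing_by have := List.sizeOf_lt_of_mem t.2; simp_wf; omega

/-- The list of the numbers of descendant leaves of each internal node,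
with the root (if internal) first. -/
def allInternalSizes : PTree → List ℕ
  | .leaf _ => []
  | .node ts => (PTree.node ts).leaves.length :: ts.attach.flatMap (fun t => allInternalSizes t.1)
decreasing_by have := List.sizeOf_lt_of_mem t.2; simp_wf; omega

/-- The total cophenetic index: sum of cophenetic values over pairs of distinct leaves. -/
def Phi (T : PTree) : ℕ :=
  ∑ i ∈ T.leaves.toFinset, ∑ j ∈ T.leaves.toFinset, if i < j then cophen T i j else 0

/-- The Sackin index: the sum of the depths of the leaves. -/
def Sackin (T : PTree) : ℕ := ∑ i ∈ T.leaves.toFinset, leafDepth T i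

/-- The total area: the sum of the nodal distances between pairs of distinct leaves. -/
def Darea (T : PTree) : ℕ :=
  ∑ i ∈ T.leaves.toFinset, ∑ j ∈ T.leaves.toFinset, if i < j then ndist T i j else 0

/-- A tree is binary when every internal node has exactly two children. -/
def IsBinary : PTree → Prop
  | .leaf _ => True
  | .node ts => ts.length = 2 ∧ ∀ t ∈ ts.attach, IsBinary t.1
decreasing_by have := List.sizeOf_lt_of_mem t.2; simp_wf; omega

/-- A tree is proper when every internal node has at least two children. -/
def Proper : PTree → Prop
  | .leaf _ => True
  | .node ts => 2 ≤ ts.length ∧ ∀ t ∈ ts.attach, Proper t.1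
decreasing_by have := List.sizeOf_lt_of_mem t.2; simp_wf; omega

/-- `T` is a phylogenetic tree with `n` leaves: a proper rooted tree whose leaves are
bijectively labeled by `{1, …, n}`. -/
def IsPhylo (n : ℕ) (T : PTree) : Prop :=
  Proper T ∧ T.leaves.Nodup ∧ T.leaves.toFinset = Finset.Icc 1 n

/-- A rooted caterpillar: a binary tree all of whose internal nodes have a leaf child. -/
def IsCaterpillar : PTree → Prop
  | .leaf _ => True
  | .node ts => ts.length = 2 ∧ (∃ t ∈ ts, ∃ i, t = PTree.leaf i) ∧
      ∀ t ∈ ts.attach, IsCaterpillar t.1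
decreasing_by have := List.sizeOf_lt_of_mem t.2; simp_wf; omega

/-- A binary tree is maximally balanced when every internal node is balanced, i.e. the
numbers of descendant leaves of its two children differ by at most one. -/
def MaxBalanced : PTree → Prop
  | .leaf _ => True
  | .node [a, b] =>
      |(a.leaves.length : ℤ) - (b.leaves.length : ℤ)| ≤ 1 ∧ MaxBalanced a ∧ MaxBalanced b
  | .node _ => False

/-- Canonical representative of an isomorphism class of binary trees: at every internal node
the subtree containing the smallest leaf label comes first. -/
def Canonical : PTree → Prop
  | .leaf _ => True
  | .node [a, b] => a.leaves.minimum < b.leaves.minimum ∧ Canonical a ∧ Canonical b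
  | .node _ => False

/-- The rooted caterpillar with `n` leaves labeled `1, …, n` (for `n ≥ 1`). -/
def caterpillar : ℕ → PTree
  | 0 => .leaf 1
  | 1 => .leaf 1
  | n + 2 => .node [caterpillar (n + 1), .leaf (n + 2)]

/-- `Replace T t₀ t₀' T'` holds when `T'` is obtained from `T` by replacing the subtree `t₀`
of `T` rooted at some node by the tree `t₀'`. -/
inductive Replace : PTree → PTree → PTree → PTree → Prop where
  | here (t₀ t₀' : PTree) : Replace t₀ t₀ t₀' t₀'
  | child (l r : List PTree) (a b t₀ t₀' : PTree) :
      Replace a t₀ t₀' b → Replace (.node (l ++ a :: r)) t₀ t₀' (.node (l ++ b :: r))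

/-- The probability of a binary phylogenetic tree with `n` leaves under the Yule model. -/
noncomputable def yuleP (n : ℕ) (T : PTree) : ℝ :=
  (2 ^ (n - 1) / (n.factorial : ℝ)) *
    ((allInternalSizes T).map (fun k => ((k : ℝ) - 1)⁻¹)).prod

end PTree


namespace PTree

theorem leaves_node (ts : List PTree) : (PTree.node ts).leaves = ts.flatMap leaves := by
  rw [leaves, List.flatMap, List.flatMap]
  congr 1
  rw [← List.attach_map_val (l := ts) (f := fun t => t.leaves)]

theorem leaves_leaf (j : ℕ) : (PTree.leaf j).leaves = [j] := by rw [leaves]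

theorem leaves_pair (a b : PTree) : (PTree.node [a, b]).leaves = a.leaves ++ b.leaves := by
  simp [leaves_node]

theorem isBinary_pair {a b : PTree} : IsBinary (.node [a, b]) ↔ IsBinary a ∧ IsBinary b := by
  rw [IsBinary]
  simp

theorem isBinary_node {ts : List PTree} (h : IsBinary (.node ts)) :
    ∃ a b, ts = [a, b] ∧ IsBinary a ∧ IsBinary b := by
  rw [IsBinary] at h
  obtain ⟨hl, h2⟩ := h
  match ts, hl with
  | [a, b], _ =>
    exact ⟨a, b, rfl, h2 ⟨a, by simp⟩ (by simp), h2 ⟨b, by simp⟩ (by simp)⟩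

theorem leaves_ne_nil {T : PTree} (h : IsBinary T) : T.leaves ≠ [] := by
  induction T using PTree.leaves.induct with
  | case1 j => simp [leaves_leaf]
  | case2 ts ih =>
    obtain ⟨a, b, rfl, ha, hb⟩ := isBinary_node h
    have := ih ⟨a, by simp⟩ ha
    simp only [leaves_pair]
    intro hc
    rcases List.append_eq_nil_iff.mp hc with ⟨h1, -⟩
    exact this h1

theorem eq_leaf_of_leaves_singleton {T : PTree} (h : IsBinary T) {y : ℕ}
    (hl : T.leaves = [y]) : T = .leaf y := by
  cases T with
  | leaf j => rw [leaves_leaf] at hl; simp_all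
  | node ts =>
    obtain ⟨a, b, rfl, ha, hb⟩ := isBinary_node h
    rw [leaves_pair] at hl
    have h1 := leaves_ne_nil ha
    have h2 := leaves_ne_nil hb
    exfalso
    rcases List.exists_cons_of_ne_nil h1 with ⟨x1, l1, e1⟩
    rcases List.exists_cons_of_ne_nil h2 with ⟨x2, l2, e2⟩
    rw [e1, e2] at hl
    simp at hl

end PTree

namespace PTree

theorem perm_toFinset {l l' : List ℕ} (h : l.Perm l') : l.toFinset = l'.toFinset := by
  ext a; simp [h.mem_iff]

theorem minimum_congr {l l' : List ℕ} (h : l.Perm l') : l.minimum = l'.minimum := by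
  cases hm : l.minimum with
  | top =>
    rw [List.minimum_eq_top] at hm
    subst hm
    have : l' = [] := h.symm.eq_nil
    simp [this]
  | coe m =>
    rw [List.minimum_eq_coe_iff] at hm
    symm
    rw [List.minimum_eq_coe_iff]
    exact ⟨h.mem_iff.mp hm.1, fun a ha => hm.2 a (h.mem_iff.mpr ha)⟩

theorem minimum_cons_of_le {x : ℕ} {l : List ℕ} (hne : l ≠ []) (h : ∀ y ∈ l, y ≤ x) :
    (x :: l).minimum = l.minimum := by
  cases hm : l.minimum with
  | top => rw [List.minimum_eq_top] at hm; exact absurd hm hne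
  | coe m =>
    rw [List.minimum_eq_coe_iff] at hm
    rw [List.minimum_eq_coe_iff]
    exact ⟨List.mem_cons_of_mem _ hm.1, by
      intro a ha
      rcases List.mem_cons.mp ha with rfl | ha
      · exact h _ hm.1
      · exact hm.2 a ha⟩

theorem minimum_lt_coe {x : ℕ} {l : List ℕ} (hne : l ≠ []) (h : ∀ y ∈ l, y < x) :
    l.minimum < (x : WithTop ℕ) := by
  cases hm : l.minimum with
  | top => rw [List.minimum_eq_top] at hm; exact absurd hm hne
  | coe m =>
    rw [List.minimum_eq_coe_iff] at hm
    exact WithTop.coe_lt_coe.mpr (h m hm.1)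

/-- All trees obtained from `T` by grafting a new leaf `x` on an edge (or above the root). -/
def graftAll : PTree → ℕ → List PTree
  | .leaf j, x => [.node [.leaf j, .leaf x]]
  | .node [a, b], x =>
      .node [.node [a, b], .leaf x] ::
        ((graftAll a x).map fun a' => .node [a', b]) ++
          ((graftAll b x).map fun b' => .node [a, b'])
  | t, x => [.node [t, .leaf x]]

theorem graft_root (T : PTree) (x : ℕ) : PTree.node [T, .leaf x] ∈ graftAll T x := by
  match T with
  | .leaf j => simp [graftAll]
  | .node [a, b] => simp [graftAll]
  | .node [] => simp [graftAll]
  | .node [a] => simp [graftAll]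
  | .node (a :: b :: c :: ts) => simp [graftAll]

theorem graft_is_node {T T' : PTree} {x : ℕ} (h : T' ∈ graftAll T x) :
    ∃ ts, T' = .node ts := by
  match T with
  | .leaf j => simp [graftAll] at h; exact ⟨_, h⟩
  | .node [a, b] =>
    simp [graftAll] at h
    rcases h with rfl | ⟨a', _, rfl⟩ | ⟨b', _, rfl⟩ <;> exact ⟨_, rfl⟩
  | .node [] => simp [graftAll] at h; exact ⟨_, h⟩
  | .node [a] => simp [graftAll] at h; exact ⟨_, h⟩
  | .node (a :: b :: c :: ts) => simp [graftAll] at h; exact ⟨_, h⟩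

end PTree

namespace PTree

theorem graft_leaves {T : PTree} {x : ℕ} : ∀ T' ∈ graftAll T x, T'.leaves.Perm (x :: T.leaves) := by
  induction T, x using graftAll.induct with
  | case1 j x =>
    intro T' h
    simp [graftAll] at h
    subst h
    simp [leaves_pair, leaves_leaf]
    exact List.Perm.swap _ _ _
  | case2 a b x iha ihb =>
    intro T' h
    simp only [graftAll, List.mem_cons, List.mem_append, List.mem_map] at h
    rcases h with (rfl | ⟨a', ha', rfl⟩) | ⟨b', hb', rfl⟩
    · rw [leaves_pair, leaves_leaf]
      exact List.perm_append_singleton _ _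
    · rw [leaves_pair, leaves_pair]
      exact (iha a' ha').append_right _
    · rw [leaves_pair, leaves_pair]
      exact ((ihb b' hb').append_left _).trans List.perm_middle
  | case3 t x h1 h2 =>
    intro T' h
    have : T' = .node [t, .leaf x] := by
      match t with
      | .leaf j => exact absurd rfl (h1 j)
      | .node [a, b] => exact absurd rfl (h2 a b)
      | .node [] => simpa [graftAll] using h
      | .node [a] => simpa [graftAll] using h
      | .node (a :: b :: c :: ts) => simpa [graftAll] using h
    subst this
    rw [leaves_pair, leaves_leaf]
    exact List.perm_append_singleton _ _

theorem graft_isBinary {T : PTree} {x : ℕ} (hb : IsBinary T) :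
    ∀ T' ∈ graftAll T x, IsBinary T' := by
  induction T, x using graftAll.induct with
  | case1 j x =>
    intro T' h
    simp [graftAll] at h
    subst h
    simp [isBinary_pair, IsBinary]
  | case2 a b x iha ihb =>
    obtain ⟨hba, hbb⟩ := isBinary_pair.mp hb
    intro T' h
    simp only [graftAll, List.mem_cons, List.mem_append, List.mem_map] at h
    rcases h with (rfl | ⟨a', ha', rfl⟩) | ⟨b', hb', rfl⟩
    · rw [isBinary_pair]; exact ⟨hb, by rw [IsBinary]; trivial⟩
    · rw [isBinary_pair]; exact ⟨iha hba a' ha', hbb⟩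
    · rw [isBinary_pair]; exact ⟨hba, ihb hbb b' hb'⟩
  | case3 t x h1 h2 =>
    intro T' h
    exfalso
    match t with
    | .leaf j => exact h1 j rfl
    | .node ts =>
      obtain ⟨a, b, rfl, -, -⟩ := isBinary_node hb
      exact h2 a b rfl

theorem graft_canonical {T : PTree} {x : ℕ} (hb : IsBinary T) (hc : Canonical T)
    (hlt : ∀ y ∈ T.leaves, y < x) : ∀ T' ∈ graftAll T x, Canonical T' := by
  induction T, x using graftAll.induct with
  | case1 j x =>
    intro T' h
    simp [graftAll] at h
    subst h
    rw [Canonical]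
    refine ⟨?_, by rw [Canonical]; trivial, by rw [Canonical]; trivial⟩
    simp only [leaves_leaf, List.minimum_singleton]
    exact WithTop.coe_lt_coe.mpr (hlt j (by simp [leaves_leaf]))
  | case2 a b x iha ihb =>
    obtain ⟨hba, hbb⟩ := isBinary_pair.mp hb
    rw [Canonical] at hc
    obtain ⟨hmin, hca, hcb⟩ := hc
    have hlta : ∀ y ∈ a.leaves, y < x := fun y hy => hlt y (by rw [leaves_pair]; simp [hy])
    have hltb : ∀ y ∈ b.leaves, y < x := fun y hy => hlt y (by rw [leaves_pair]; simp [hy])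
    intro T' h
    simp only [graftAll, List.mem_cons, List.mem_append, List.mem_map] at h
    rcases h with (rfl | ⟨a', ha', rfl⟩) | ⟨b', hb', rfl⟩
    · rw [Canonical]
      refine ⟨?_, by rw [Canonical]; exact ⟨hmin, hca, hcb⟩, by rw [Canonical]; trivial⟩
      rw [leaves_leaf, List.minimum_singleton]
      exact minimum_lt_coe (leaves_ne_nil hb) hlt
    · rw [Canonical]
      refine ⟨?_, iha hba hca hlta a' ha', hcb⟩
      rw [minimum_congr (graft_leaves a' ha'),
        minimum_cons_of_le (leaves_ne_nil hba) (fun y hy => (hlta y hy).le)]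
      exact hmin
    · rw [Canonical]
      refine ⟨?_, hca, ihb hbb hcb hltb b' hb'⟩
      rw [minimum_congr (graft_leaves b' hb'),
        minimum_cons_of_le (leaves_ne_nil hbb) (fun y hy => (hltb y hy).le)]
      exact hmin
  | case3 t x h1 h2 =>
    intro T' h
    exfalso
    match t with
    | .leaf j => exact h1 j rfl
    | .node ts =>
      obtain ⟨a, b, rfl, -, -⟩ := isBinary_node hb
      exact h2 a b rfl

theorem graft_length {T : PTree} {x : ℕ} (hb : IsBinary T) :
    (graftAll T x).length + 1 = 2 * T.leaves.length := by
  induction T, x using graftAll.induct with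
  | case1 j x => simp [graftAll, leaves_leaf]
  | case2 a b x iha ihb =>
    obtain ⟨hba, hbb⟩ := isBinary_pair.mp hb
    have h1 := iha hba
    have h2 := ihb hbb
    simp only [graftAll, leaves_pair, List.length_cons, List.length_append, List.length_map,
      List.length_cons]
    omega
  | case3 t x h1 h2 =>
    exfalso
    match t with
    | .leaf j => exact h1 j rfl
    | .node ts =>
      obtain ⟨a, b, rfl, -, -⟩ := isBinary_node hb
      exact h2 a b rfl

end PTree

namespace PTree

noncomputable instance : DecidableEq PTree := Classical.decEq PTree

/-- Delete the leaf labeled `x` (suppressing its parent). -/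
noncomputable def delx (x : ℕ) : PTree → PTree
  | .node [a, b] =>
      if b = .leaf x then a
      else if a = .leaf x then b
      else if x ∈ b.leaves then .node [a, delx x b]
      else .node [delx x a, b]
  | t => t

theorem mem_leaves_of_eq_leaf {t : PTree} {x : ℕ} (h : t = .leaf x) : x ∈ t.leaves := by
  subst h; simp [leaves_leaf]

theorem delx_of_not_mem {x : ℕ} : ∀ {T : PTree}, x ∉ T.leaves → delx x T = T := by
  intro T
  induction T using delx.induct (x := x) with
  | case1 a =>
    intro hx
    exfalso
    apply hx
    rw [leaves_pair, leaves_leaf]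
    simp
  | case2 b hb =>
    intro hx
    exfalso
    apply hx
    rw [leaves_pair, leaves_leaf]
    simp
  | case3 a b h1 h2 h3 ih =>
    intro hx
    exfalso
    apply hx
    rw [leaves_pair]
    simp [h3]
  | case4 a b h1 h2 h3 ih =>
    intro hx
    rw [leaves_pair] at hx
    simp only [List.mem_append, not_or] at hx
    rw [delx, if_neg h1, if_neg h2, if_neg h3, ih hx.1]
  | case5 t h =>
    intro _
    match t with
    | .leaf j => rw [delx] <;> simp
    | .node [a, b] => exact absurd rfl (h a b)
    | .node [] => rw [delx] <;> simp
    | .node [a] => rw [delx] <;> simp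
    | .node (a :: b :: c :: ts) => rw [delx] <;> simp

theorem delx_graft {x : ℕ} : ∀ {T : PTree}, x ∉ T.leaves → ∀ T' ∈ graftAll T x, delx x T' = T := by
  intro T
  induction T, x using graftAll.induct with
  | case1 j x =>
    intro hx T' h
    simp [graftAll] at h
    subst h
    rw [delx, if_pos rfl]
  | case2 a b x iha ihb =>
    intro hx T' h
    rw [leaves_pair] at hx
    simp only [List.mem_append, not_or] at hx
    simp only [graftAll, List.mem_cons, List.mem_append, List.mem_map] at h
    rcases h with (rfl | ⟨a', ha', rfl⟩) | ⟨b', hb', rfl⟩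
    · rw [delx, if_pos rfl]
    · obtain ⟨ts, rfl⟩ := graft_is_node ha'
      rw [delx, if_neg (fun hh => hx.2 (mem_leaves_of_eq_leaf hh)),
        if_neg (by simp), if_neg hx.2, iha hx.1 _ ha']
    · obtain ⟨ts, rfl⟩ := graft_is_node hb'
      rw [delx, if_neg (by simp),
        if_neg (fun hh => hx.1 (mem_leaves_of_eq_leaf hh)),
        if_pos ((graft_leaves _ hb').mem_iff.mpr (by simp)), ihb hx.2 _ hb']
  | case3 t x h1 h2 =>
    intro hx T' h
    have : T' = .node [t, .leaf x] := by
      match t with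
      | .leaf j => exact absurd rfl (h1 j)
      | .node [a, b] => exact absurd rfl (h2 a b)
      | .node [] => simpa [graftAll] using h
      | .node [a] => simpa [graftAll] using h
      | .node (a :: b :: c :: ts) => simpa [graftAll] using h
    subst this
    rw [delx, if_pos rfl]

theorem ne_leaf_of_min {a b : PTree} {x : ℕ}
    (hmin : a.leaves.minimum < b.leaves.minimum) (hbne : b.leaves ≠ [])
    (hmax : ∀ y ∈ b.leaves, y ≤ x) : a ≠ .leaf x := by
  rintro rfl
  rw [leaves_leaf, List.minimum_singleton] at hmin
  cases hm : b.leaves.minimum with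
  | top => rw [List.minimum_eq_top] at hm; exact hbne hm
  | coe m =>
    rw [hm] at hmin
    rw [List.minimum_eq_coe_iff] at hm
    have h1 := hmax m hm.1
    have h2 := WithTop.coe_lt_coe.mp hmin
    omega

theorem delx_spec {x : ℕ} : ∀ {T : PTree}, IsBinary T → T.leaves.Nodup →
    x ∈ T.leaves → (∀ y ∈ T.leaves, y ≤ x) → T.leaves ≠ [x] → Canonical T →
    IsBinary (delx x T) ∧ Canonical (delx x T) ∧
      (x :: (delx x T).leaves).Perm T.leaves ∧ T ∈ graftAll (delx x T) x := by
  intro T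
  induction T, x using graftAll.induct with
  | case1 j x =>
    intro _ _ hx _ hne _
    rw [leaves_leaf] at hx hne
    simp at hx
    subst hx
    exact absurd rfl hne
  | case2 a b x iha ihb =>
    intro hb hn hx hmax hne hc
    obtain ⟨hba, hbb⟩ := isBinary_pair.mp hb
    rw [Canonical] at hc
    obtain ⟨hmin, hca, hcb⟩ := hc
    rw [leaves_pair] at hn hx hmax
    obtain ⟨na, nb, disj⟩ := List.nodup_append.mp hn
    have hmaxa : ∀ y ∈ a.leaves, y ≤ x := fun y hy => hmax y (by simp [hy])
    have hmaxb : ∀ y ∈ b.leaves, y ≤ x := fun y hy => hmax y (by simp [hy])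
    by_cases hbx : b = .leaf x
    · subst hbx
      rw [delx, if_pos rfl]
      refine ⟨hba, hca, ?_, graft_root a x⟩
      rw [leaves_pair, leaves_leaf]
      exact (List.perm_append_singleton x a.leaves).symm
    · have hax : a ≠ .leaf x := ne_leaf_of_min hmin (leaves_ne_nil hbb) hmaxb
      by_cases hxb : x ∈ b.leaves
      · have hxa : x ∉ a.leaves := fun hxa => disj x hxa x hxb rfl
        have hbne : b.leaves ≠ [x] := fun hh => hbx (eq_leaf_of_leaves_singleton hbb hh)
        obtain ⟨ib, cb, pb, gb⟩ := ihb hbb nb hxb hmaxb hbne hcb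
        rw [delx, if_neg hbx, if_neg hax, if_pos hxb]
        have hdbne : (delx x b).leaves ≠ [] := by
          intro hh
          apply hbne
          have := pb.symm
          rw [hh] at this
          exact this.eq_singleton
        have hdmax : ∀ y ∈ (delx x b).leaves, y ≤ x := fun y hy =>
          hmaxb y (pb.mem_iff.mp (by simp [hy]))
        have hminb : (delx x b).leaves.minimum = b.leaves.minimum := by
          rw [← minimum_congr pb, minimum_cons_of_le hdbne hdmax]
        refine ⟨isBinary_pair.mpr ⟨hba, ib⟩, ?_, ?_, ?_⟩
        · rw [Canonical]
          exact ⟨by rw [hminb]; exact hmin, hca, cb⟩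
        · rw [leaves_pair, leaves_pair]
          exact List.perm_middle.symm.trans (pb.append_left a.leaves)
        · simp only [graftAll, List.mem_cons, List.mem_append, List.mem_map]
          exact Or.inr ⟨b, gb, rfl⟩
      · have hxa : x ∈ a.leaves := by
          rcases List.mem_append.mp hx with h | h
          · exact h
          · exact absurd h hxb
        have hane : a.leaves ≠ [x] := fun hh => hax (eq_leaf_of_leaves_singleton hba hh)
        obtain ⟨ia, ca, pa, ga⟩ := iha hba na hxa hmaxa hane hca
        rw [delx, if_neg hbx, if_neg hax, if_neg hxb]
        have hdane : (delx x a).leaves ≠ [] := by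
          intro hh
          apply hane
          have := pa.symm
          rw [hh] at this
          exact this.eq_singleton
        have hdmax : ∀ y ∈ (delx x a).leaves, y ≤ x := fun y hy =>
          hmaxa y (pa.mem_iff.mp (by simp [hy]))
        have hmina : (delx x a).leaves.minimum = a.leaves.minimum := by
          rw [← minimum_congr pa, minimum_cons_of_le hdane hdmax]
        refine ⟨isBinary_pair.mpr ⟨ia, hbb⟩, ?_, ?_, ?_⟩
        · rw [Canonical]
          exact ⟨by rw [hmina]; exact hmin, ca, hcb⟩
        · rw [leaves_pair, leaves_pair]
          exact pa.append_right b.leaves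
        · simp only [graftAll, List.mem_cons, List.mem_append, List.mem_map]
          exact Or.inl (Or.inr ⟨a, ga, rfl⟩)
  | case3 t x h1 h2 =>
    intro hb _ _ _ _ _
    exfalso
    match t with
    | .leaf j => exact h1 j rfl
    | .node ts =>
      obtain ⟨a2, b2, rfl, -, -⟩ := isBinary_node hb
      exact h2 a2 b2 rfl

theorem graft_nodup {x : ℕ} : ∀ {T : PTree}, IsBinary T → x ∉ T.leaves →
    (graftAll T x).Nodup := by
  intro T
  induction T, x using graftAll.induct with
  | case1 j x => intro _ _; simp [graftAll]
  | case2 a b x iha ihb =>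
    intro hb hx
    obtain ⟨hba, hbb⟩ := isBinary_pair.mp hb
    rw [leaves_pair] at hx
    simp only [List.mem_append, not_or] at hx
    have hxa := hx.1
    have hxb := hx.2
    rw [graftAll]
    refine List.nodup_cons.mpr ⟨?_, ?_⟩
    · intro hmem
      rcases List.mem_append.mp hmem with h | h
      · obtain ⟨a', ha', he⟩ := List.mem_map.mp h
        simp only [node.injEq, List.cons.injEq, and_true] at he
        exact hxb (mem_leaves_of_eq_leaf he.2)
      · obtain ⟨b', hb', he⟩ := List.mem_map.mp h
        obtain ⟨ts, rfl⟩ := graft_is_node hb'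
        simp only [node.injEq, List.cons.injEq, and_true] at he
        exact PTree.noConfusion he.2
    · refine List.Nodup.append ((iha hba hxa).map ?_) ((ihb hbb hxb).map ?_) ?_
      · intro u v h
        simp only [node.injEq, List.cons.injEq, and_true] at h
        exact h
      · intro u v h
        simp only [node.injEq, List.cons.injEq, true_and, and_true] at h
        exact h
      · rw [List.disjoint_left]
        rintro T' h1 h2
        obtain ⟨a', ha', he1⟩ := List.mem_map.mp h1
        obtain ⟨b', hb', he2⟩ := List.mem_map.mp h2
        rw [← he1] at he2
        simp only [node.injEq, List.cons.injEq, and_true] at he2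
        obtain ⟨rfl, rfl⟩ := he2
        exact hxa ((graft_leaves _ ha').mem_iff.mpr (by simp))
  | case3 t x h1 h2 =>
    intro hb _
    exfalso
    match t with
    | .leaf j => exact h1 j rfl
    | .node ts =>
      obtain ⟨a2, b2, rfl, -, -⟩ := isBinary_node hb
      exact h2 a2 b2 rfl

/-- All forests obtained from `F` by grafting a new leaf `x` into one of the trees. -/
def graftF (x : ℕ) : List PTree → List (List PTree)
  | [] => []
  | T :: F => ((graftAll T x).map (· :: F)) ++ (graftF x F).map (T :: ·)

/-- All forests obtained from `F` by inserting the single-leaf tree `x` somewhere. -/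
def insF (x : ℕ) : List PTree → List (List PTree)
  | [] => [[.leaf x]]
  | T :: F => (.leaf x :: T :: F) :: (insF x F).map (T :: ·)

theorem mem_graftF {x : ℕ} : ∀ {F F' : List PTree}, F' ∈ graftF x F ↔
    ∃ A T B T', F = A ++ T :: B ∧ T' ∈ graftAll T x ∧ F' = A ++ T' :: B := by
  intro F
  induction F with
  | nil =>
    intro F'
    simp only [graftF, List.not_mem_nil, false_iff]
    rintro ⟨A, T, B, T', hF, -, -⟩
    exact absurd hF (by simp)
  | cons T F ih =>
    intro F'
    simp only [graftF, List.mem_append, List.mem_map]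
    constructor
    · rintro (⟨T', hT', rfl⟩ | ⟨G, hG, rfl⟩)
      · exact ⟨[], T, F, T', rfl, hT', rfl⟩
      · obtain ⟨A, T₀, B, T', rfl, hT', rfl⟩ := ih.mp hG
        exact ⟨T :: A, T₀, B, T', rfl, hT', rfl⟩
    · rintro ⟨A, T₀, B, T', hF, hT', rfl⟩
      match A, hF with
      | [], hF =>
        simp only [List.nil_append] at hF
        injection hF with h1 h2
        subst h1
        subst h2
        exact Or.inl ⟨T', hT', by simp⟩
      | T₁ :: A, hF =>
        rw [List.cons_append] at hF
        injection hF with h1 h2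
        subst h1
        exact Or.inr ⟨A ++ T' :: B, ih.mpr ⟨A, T₀, B, T', h2, hT', rfl⟩, by simp⟩

theorem mem_insF {x : ℕ} : ∀ {F F' : List PTree}, F' ∈ insF x F ↔
    ∃ A B, F = A ++ B ∧ F' = A ++ .leaf x :: B := by
  intro F
  induction F with
  | nil =>
    intro F'
    simp only [insF, List.mem_singleton]
    constructor
    · rintro rfl; exact ⟨[], [], rfl, rfl⟩
    · rintro ⟨A, B, hF, rfl⟩
      obtain ⟨rfl, rfl⟩ := List.append_eq_nil_iff.mp hF.symm
      rfl
  | cons T F ih =>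
    intro F'
    simp only [insF, List.mem_cons, List.mem_map]
    constructor
    · rintro (rfl | ⟨G, hG, rfl⟩)
      · exact ⟨[], T :: F, rfl, rfl⟩
      · obtain ⟨A, B, rfl, rfl⟩ := ih.mp hG
        exact ⟨T :: A, B, rfl, rfl⟩
    · rintro ⟨A, B, hF, rfl⟩
      match A, hF with
      | [], hF =>
        simp only [List.nil_append] at hF
        subst hF
        exact Or.inl (by simp)
      | T₁ :: A, hF =>
        rw [List.cons_append] at hF
        injection hF with h1 h2
        subst h1
        exact Or.inr ⟨A ++ .leaf x :: B, ih.mpr ⟨A, B, h2, rfl⟩, by simp⟩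

theorem graftF_perm {x : ℕ} {F F' : List PTree} (h : F' ∈ graftF x F) :
    (F'.flatMap leaves).Perm (x :: F.flatMap leaves) := by
  obtain ⟨A, T, B, T', rfl, hT', rfl⟩ := mem_graftF.mp h
  simp only [List.flatMap_append, List.flatMap_cons]
  have p1 : (A.flatMap leaves ++ (T'.leaves ++ B.flatMap leaves)).Perm
      (A.flatMap leaves ++ (x :: (T.leaves ++ B.flatMap leaves))) :=
    List.Perm.append_left _ ((graft_leaves T' hT').append_right _)
  have p2 : (A.flatMap leaves ++ (x :: (T.leaves ++ B.flatMap leaves))).Perm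
      (x :: (A.flatMap leaves ++ (T.leaves ++ B.flatMap leaves))) := List.perm_middle
  simpa using p1.trans p2

theorem insF_perm {x : ℕ} {F F' : List PTree} (h : F' ∈ insF x F) :
    (F'.flatMap leaves).Perm (x :: F.flatMap leaves) := by
  obtain ⟨A, B, rfl, rfl⟩ := mem_insF.mp h
  simp only [List.flatMap_append, List.flatMap_cons, leaves_leaf]
  have p2 : (A.flatMap leaves ++ (x :: B.flatMap leaves)).Perm
      (x :: (A.flatMap leaves ++ B.flatMap leaves)) := List.perm_middle
  simpa using p2

/-- The predicate for ordered binary canonical forests on `{1, …, n}` with `m` trees. -/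
def Ok (n m : ℕ) (F : List PTree) : Prop :=
  F.length = m ∧ (∀ T ∈ F, IsBinary T ∧ Canonical T ∧ T.leaves ≠ []) ∧
    (F.flatMap leaves).Nodup ∧ (F.flatMap leaves).toFinset = Finset.Icc 1 n

/-- All binary canonical forests on `{1, …, n}` with `m` trees. -/
def allForests : ℕ → ℕ → List (List PTree)
  | 0, 0 => [[]]
  | 0, _+1 => []
  | _+1, 0 => []
  | n+1, m+1 =>
      ((allForests n (m+1)).flatMap (graftF (n+1))) ++ ((allForests n m).flatMap (insF (n+1)))

theorem Icc_succ_insert (n : ℕ) : Finset.Icc 1 (n+1) = insert (n+1) (Finset.Icc 1 n) := by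
  ext a
  simp only [Finset.mem_Icc, Finset.mem_insert]
  omega

theorem step_up {n : ℕ} {l l₀ : List ℕ} (p : l.Perm ((n+1) :: l₀)) (h0 : l₀.Nodup)
    (ht : l₀.toFinset = Finset.Icc 1 n) : l.Nodup ∧ l.toFinset = Finset.Icc 1 (n+1) := by
  have hx : (n+1) ∉ l₀ := by
    intro h
    have := ht ▸ List.mem_toFinset.mpr h
    simp [Finset.mem_Icc] at this
  refine ⟨p.nodup_iff.mpr (List.nodup_cons.mpr ⟨hx, h0⟩), ?_⟩
  rw [perm_toFinset p, List.toFinset_cons, ht, Icc_succ_insert]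

theorem step_down {n : ℕ} {l l₀ : List ℕ} (p : l.Perm ((n+1) :: l₀)) (hnd : l.Nodup)
    (ht : l.toFinset = Finset.Icc 1 (n+1)) : l₀.Nodup ∧ l₀.toFinset = Finset.Icc 1 n := by
  have h1 : ((n+1) :: l₀).Nodup := p.nodup_iff.mp hnd
  have hx : (n+1) ∉ l₀ := (List.nodup_cons.mp h1).1
  refine ⟨(List.nodup_cons.mp h1).2, ?_⟩
  have h2 : insert (n+1) l₀.toFinset = Finset.Icc 1 (n+1) := by
    rw [← List.toFinset_cons, ← perm_toFinset p, ht]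
  ext a
  simp only [Finset.mem_Icc]
  constructor
  · intro ha
    have h3 : a ∈ Finset.Icc 1 (n+1) := h2 ▸ Finset.mem_insert_of_mem ha
    simp only [Finset.mem_Icc] at h3
    have hne : a ≠ n+1 := fun hh => hx (List.mem_toFinset.mp (hh ▸ ha))
    omega
  · intro ha
    have h3 : a ∈ Finset.Icc 1 (n+1) := by simp only [Finset.mem_Icc]; omega
    rw [← h2] at h3
    rcases Finset.mem_insert.mp h3 with rfl | h
    · omega
    · exact h

theorem ok_bound {n m : ℕ} {F : List PTree} (h : Ok n m F) :
    ∀ T ∈ F, ∀ y ∈ T.leaves, 1 ≤ y ∧ y ≤ n := by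
  intro T hT y hy
  have : y ∈ (F.flatMap leaves).toFinset :=
    List.mem_toFinset.mpr (List.mem_flatMap.mpr ⟨T, hT, hy⟩)
  rw [h.2.2.2] at this
  exact Finset.mem_Icc.mp this

theorem mem_allForests : ∀ (n m : ℕ) (F : List PTree), F ∈ allForests n m ↔ Ok n m F := by
  intro n
  induction n with
  | zero =>
    intro m F
    match m with
    | 0 =>
      simp only [allForests, List.mem_singleton]
      constructor
      · rintro rfl
        exact ⟨rfl, by simp, by simp, by simp⟩
      · rintro ⟨hl, -, -, -⟩
        exact List.length_eq_zero_iff.mp hl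
    | m+1 =>
      simp only [allForests, List.not_mem_nil, false_iff]
      rintro ⟨hl, htrees, -, htf⟩
      have hFne : F ≠ [] := by intro h; subst h; simp at hl
      obtain ⟨T, hT⟩ := List.exists_mem_of_ne_nil F hFne
      obtain ⟨y, hy⟩ := List.exists_mem_of_ne_nil _ (htrees T hT).2.2
      have : y ∈ (F.flatMap leaves).toFinset :=
        List.mem_toFinset.mpr (List.mem_flatMap.mpr ⟨T, hT, hy⟩)
      rw [htf] at this
      simp at this
  | succ n ihn =>
    intro m F
    match m with
    | 0 =>
      simp only [allForests, List.not_mem_nil, false_iff]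
      rintro ⟨hl, -, -, htf⟩
      have : F = [] := List.length_eq_zero_iff.mp hl
      subst this
      have : (1 : ℕ) ∈ Finset.Icc 1 (n+1) := by simp
      rw [← htf] at this
      simp at this
    | m+1 =>
      rw [allForests]
      simp only [List.mem_append, List.mem_flatMap]
      constructor
      · rintro (⟨F₀, hF₀, hF⟩ | ⟨F₀, hF₀, hF⟩)
        · have hOk₀ := (ihn (m+1) F₀).mp hF₀
          obtain ⟨A, T, B, T', hdec, hT', hFe⟩ := mem_graftF.mp hF
          subst hdec
          subst hFe
          have hTmem : T ∈ A ++ T :: B := by simp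
          obtain ⟨hbT, hcT, hneT⟩ := hOk₀.2.1 T hTmem
          have hlt : ∀ y ∈ T.leaves, y < n+1 := fun y hy => by
            have := ok_bound hOk₀ T hTmem y hy; omega
          have pT := graft_leaves T' hT'
          have p := graftF_perm hF
          have hstep := step_up p hOk₀.2.2.1 hOk₀.2.2.2
          refine ⟨by have := hOk₀.1; simp at this ⊢; omega, ?_, hstep.1, hstep.2⟩
          intro U hU
          rcases List.mem_append.mp hU with h | h
          · exact hOk₀.2.1 U (by simp [h])
          · rcases List.mem_cons.mp h with rfl | h
            · refine ⟨graft_isBinary hbT _ hT', graft_canonical hbT hcT hlt _ hT', ?_⟩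
              intro hh
              have := pT.length_eq
              rw [hh] at this
              simp at this
            · exact hOk₀.2.1 U (by simp [h])
        · have hOk₀ := (ihn m F₀).mp hF₀
          obtain ⟨A, B, hdec, hFe⟩ := mem_insF.mp hF
          subst hdec
          subst hFe
          have p := insF_perm hF
          have hstep := step_up p hOk₀.2.2.1 hOk₀.2.2.2
          refine ⟨by have := hOk₀.1; simp at this ⊢; omega, ?_, hstep.1, hstep.2⟩
          intro U hU
          rcases List.mem_append.mp hU with h | h
          · exact hOk₀.2.1 U (by simp [h])
          · rcases List.mem_cons.mp h with rfl | h
            · exact ⟨by rw [IsBinary]; trivial, by rw [Canonical]; trivial, by simp [leaves_leaf]⟩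
            · exact hOk₀.2.1 U (by simp [h])
      · intro hOk
        obtain ⟨hl, htrees, hnd, htf⟩ := hOk
        have hmem : (n+1) ∈ F.flatMap leaves := by
          rw [← List.mem_toFinset, htf]
          simp
        obtain ⟨T, hTF, hyT⟩ := List.mem_flatMap.mp hmem
        obtain ⟨A, B, hdec⟩ := List.append_of_mem hTF
        subst hdec
        obtain ⟨hbT, hcT, hneT⟩ := htrees T (by simp)
        have hmax : ∀ y ∈ T.leaves, y ≤ n+1 := fun y hy =>
          (ok_bound ⟨hl, htrees, hnd, htf⟩ T (by simp) y hy).2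
        have hndT : T.leaves.Nodup := by
          rw [List.flatMap_append, List.flatMap_cons] at hnd
          exact ((List.nodup_append.mp (List.nodup_append.mp hnd).2.1).1)
        by_cases hTx : T.leaves = [n+1]
        · have hTeq : T = .leaf (n+1) := eq_leaf_of_leaves_singleton hbT hTx
          subst hTeq
          refine Or.inr ⟨A ++ B, ?_, mem_insF.mpr ⟨A, B, rfl, rfl⟩⟩
          rw [ihn]
          have p : ((A ++ PTree.leaf (n+1) :: B).flatMap leaves).Perm
              ((n+1) :: (A ++ B).flatMap leaves) := by
            simp only [List.flatMap_append, List.flatMap_cons, leaves_leaf]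
            exact List.perm_middle
          have hstep := step_down p hnd htf
          refine ⟨?_, ?_, hstep.1, hstep.2⟩
          · have := hl; simp at this ⊢; omega
          · intro U hU
            rcases List.mem_append.mp hU with h | h
            · exact htrees U (by simp [h])
            · exact htrees U (by simp [h])
        · obtain ⟨ib, cb, pb, gb⟩ := delx_spec hbT hndT hyT hmax hTx hcT
          refine Or.inl ⟨A ++ delx (n+1) T :: B, ?_,
            mem_graftF.mpr ⟨A, delx (n+1) T, B, T, rfl, gb, rfl⟩⟩
          rw [ihn]
          have p : ((A ++ T :: B).flatMap leaves).Perm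
              ((n+1) :: (A ++ delx (n+1) T :: B).flatMap leaves) := by
            simp only [List.flatMap_append, List.flatMap_cons]
            have p1 : (A.flatMap leaves ++ (T.leaves ++ B.flatMap leaves)).Perm
                (A.flatMap leaves ++ (((n+1) :: (delx (n+1) T).leaves) ++ B.flatMap leaves)) :=
              List.Perm.append_left _ (pb.symm.append_right _)
            have p2 : (A.flatMap leaves ++ ((n+1) :: ((delx (n+1) T).leaves ++ B.flatMap leaves))).Perm
                ((n+1) :: (A.flatMap leaves ++ ((delx (n+1) T).leaves ++ B.flatMap leaves))) :=
              List.perm_middle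
            simpa using p1.trans p2
          have hstep := step_down p hnd htf
          refine ⟨by simpa using hl, ?_, hstep.1, hstep.2⟩
          intro U hU
          rcases List.mem_append.mp hU with h | h
          · exact htrees U (by simp [h])
          · rcases List.mem_cons.mp h with rfl | h
            · refine ⟨ib, cb, ?_⟩
              intro hh
              rw [hh] at pb
              have : T.leaves = [n+1] := (pb.symm).eq_singleton
              exact hTx this
            · exact htrees U (by simp [h])

theorem graftF_nodup {x : ℕ} : ∀ {F : List PTree}, (∀ T ∈ F, IsBinary T) →
    x ∉ F.flatMap leaves → (graftF x F).Nodup := by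
  intro F
  induction F with
  | nil => intro _ _; simp [graftF]
  | cons T F ih =>
    intro hb hx
    rw [List.flatMap_cons] at hx
    simp only [List.mem_append, not_or] at hx
    rw [graftF]
    refine List.Nodup.append ?_ ?_ ?_
    · refine (graft_nodup (hb T (by simp)) hx.1).map ?_
      intro u v h
      injection h
    · refine (ih (fun U hU => hb U (by simp [hU])) hx.2).map ?_
      intro u v h
      injection h
    · rw [List.disjoint_left]
      rintro F' h1 h2
      obtain ⟨T', hT', rfl⟩ := List.mem_map.mp h1
      obtain ⟨G, hG, he⟩ := List.mem_map.mp h2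
      injection he.symm with e1 e2
      subst e1
      exact hx.1 ((graft_leaves _ hT').mem_iff.mpr (by simp))

theorem insF_nodup {x : ℕ} : ∀ {F : List PTree}, (∀ T ∈ F, T ≠ .leaf x) →
    (insF x F).Nodup := by
  intro F
  induction F with
  | nil => intro _; simp [insF]
  | cons T F ih =>
    intro hne
    rw [insF]
    refine List.nodup_cons.mpr ⟨?_, ?_⟩
    · intro h
      obtain ⟨G, hG, he⟩ := List.mem_map.mp h
      injection he.symm with e1 e2
      exact hne T (by simp) e1.symm
    · refine (ih (fun U hU => hne U (by simp [hU]))).map ?_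
      intro u v h
      injection h

/-- Remove the first occurrence of the tree `leaf x` from a forest. -/
noncomputable def remx (x : ℕ) : List PTree → List PTree
  | [] => []
  | T :: F => if T = .leaf x then F else T :: remx x F

theorem map_self {α : Type} (f : α → α) : ∀ (l : List α), (∀ a ∈ l, f a = a) → l.map f = l := by
  intro l
  induction l with
  | nil => intro _; rfl
  | cons a l ih =>
    intro h
    rw [List.map_cons, h a (by simp), ih (fun b hb => h b (by simp [hb]))]

theorem graftF_recover {x : ℕ} : ∀ {F F' : List PTree}, x ∉ F.flatMap leaves →
    F' ∈ graftF x F → F'.map (delx x) = F := by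
  intro F F' hx h
  obtain ⟨A, T, B, T', rfl, hT', rfl⟩ := mem_graftF.mp h
  simp only [List.flatMap_append, List.flatMap_cons, List.mem_append, not_or] at hx
  have hA : A.map (delx x) = A := map_self _ _ (fun U hU =>
    delx_of_not_mem (fun hh => hx.1 (List.mem_flatMap.mpr ⟨U, hU, hh⟩)))
  have hB : B.map (delx x) = B := map_self _ _ (fun U hU =>
    delx_of_not_mem (fun hh => hx.2.2 (List.mem_flatMap.mpr ⟨U, hU, hh⟩)))
  rw [List.map_append, List.map_cons, hA, hB, delx_graft hx.2.1 _ hT']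

theorem insF_recover {x : ℕ} : ∀ {F F' : List PTree}, (∀ T ∈ F, T ≠ .leaf x) →
    F' ∈ insF x F → remx x F' = F := by
  intro F
  induction F with
  | nil =>
    intro F' _ h
    simp only [insF, List.mem_singleton] at h
    subst h
    rw [remx, if_pos rfl]
  | cons T F ih =>
    intro F' hne h
    rw [insF] at h
    rcases List.mem_cons.mp h with rfl | h
    · rw [remx, if_pos rfl]
    · obtain ⟨G, hG, rfl⟩ := List.mem_map.mp h
      rw [remx, if_neg (hne T (by simp)), ih (fun U hU => hne U (by simp [hU])) hG]

theorem ok_not_mem_flatMap {n m : ℕ} {F : List PTree} (h : Ok n m F) :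
    (n+1) ∉ F.flatMap leaves := by
  intro hh
  have := h.2.2.2 ▸ List.mem_toFinset.mpr hh
  simp [Finset.mem_Icc] at this

theorem ok_ne_leaf {n m : ℕ} {F : List PTree} (h : Ok n m F) :
    ∀ T ∈ F, T ≠ .leaf (n+1) := by
  rintro T hT rfl
  exact ok_not_mem_flatMap h (List.mem_flatMap.mpr ⟨_, hT, by simp [leaves_leaf]⟩)

theorem graftF_mem_ne_leaf {n m : ℕ} {F₀ F : List PTree} (h : Ok n m F₀)
    (hF : F ∈ graftF (n+1) F₀) : ∀ T ∈ F, T ≠ .leaf (n+1) := by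
  obtain ⟨A, T, B, T', rfl, hT', rfl⟩ := mem_graftF.mp hF
  intro U hU
  rcases List.mem_append.mp hU with hu | hu
  · exact ok_ne_leaf h U (by simp [hu])
  · rcases List.mem_cons.mp hu with rfl | hu
    · obtain ⟨ts, rfl⟩ := graft_is_node hT'
      exact fun hh => PTree.noConfusion hh
    · exact ok_ne_leaf h U (by simp [hu])

theorem insF_mem_leaf {n : ℕ} {F₀ F : List PTree} (hF : F ∈ insF (n+1) F₀) :
    PTree.leaf (n+1) ∈ F := by
  obtain ⟨A, B, rfl, rfl⟩ := mem_insF.mp hF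
  simp

theorem nodup_allForests : ∀ n m, (allForests n m).Nodup := by
  intro n
  induction n with
  | zero =>
    intro m
    match m with
    | 0 => simp [allForests]
    | m+1 => simp [allForests]
  | succ n ihn =>
    intro m
    match m with
    | 0 => simp [allForests]
    | m+1 =>
      rw [allForests]
      refine List.Nodup.append ?_ ?_ ?_
      · rw [List.nodup_flatMap]
        constructor
        · intro F₀ hF₀
          have hOk := (mem_allForests n (m+1) F₀).mp hF₀
          exact graftF_nodup (fun T hT => (hOk.2.1 T hT).1) (ok_not_mem_flatMap hOk)
        · refine List.Pairwise.imp_of_mem ?_ (ihn (m+1))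
          intro F₀ F₁ h₀ h₁ hne
          rw [Function.onFun, List.disjoint_left]
          intro F hF hF'
          apply hne
          have hOk₀ := (mem_allForests n (m+1) F₀).mp h₀
          have hOk₁ := (mem_allForests n (m+1) F₁).mp h₁
          rw [← graftF_recover (ok_not_mem_flatMap hOk₀) hF,
            ← graftF_recover (ok_not_mem_flatMap hOk₁) hF']
      · rw [List.nodup_flatMap]
        constructor
        · intro F₀ hF₀
          have hOk := (mem_allForests n m F₀).mp hF₀
          exact insF_nodup (ok_ne_leaf hOk)
        · refine List.Pairwise.imp_of_mem ?_ (ihn m)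
          intro F₀ F₁ h₀ h₁ hne
          rw [Function.onFun, List.disjoint_left]
          intro F hF hF'
          apply hne
          have hOk₀ := (mem_allForests n m F₀).mp h₀
          have hOk₁ := (mem_allForests n m F₁).mp h₁
          rw [← insF_recover (ok_ne_leaf hOk₀) hF, ← insF_recover (ok_ne_leaf hOk₁) hF']
      · rw [List.disjoint_left]
        intro F hF hF'
        obtain ⟨F₀, h₀, hg⟩ := List.mem_flatMap.mp hF
        obtain ⟨F₁, h₁, hi⟩ := List.mem_flatMap.mp hF'
        have hOk₀ := (mem_allForests n (m+1) F₀).mp h₀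
        exact graftF_mem_ne_leaf hOk₀ hg _ (insF_mem_leaf hi) rfl

theorem length_graftF {x : ℕ} : ∀ {F : List PTree}, (∀ T ∈ F, IsBinary T) →
    (graftF x F).length + F.length = 2 * (F.flatMap leaves).length := by
  intro F
  induction F with
  | nil => intro _; simp [graftF]
  | cons T F ih =>
    intro hb
    have h1 := graft_length (T := T) (x := x) (hb T (by simp))
    have h2 := ih (fun U hU => hb U (by simp [hU]))
    rw [graftF, List.flatMap_cons]
    simp only [List.length_append, List.length_map, List.length_cons]
    omega

theorem length_insF {x : ℕ} : ∀ (F : List PTree), (insF x F).length = F.length + 1 := by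
  intro F
  induction F with
  | nil => simp [insF]
  | cons T F ih => rw [insF]; simp [ih]

theorem sum_map_const' {α : Type} (l : List α) (f : α → ℕ) (c : ℕ) (h : ∀ a ∈ l, f a = c) :
    (l.map f).sum = l.length * c := by
  induction l with
  | nil => simp
  | cons a l ih =>
    rw [List.map_cons, List.sum_cons, h a (by simp), ih (fun b hb => h b (by simp [hb]))]
    simp [List.length_cons]
    ring

theorem ok_flatMap_length {n m : ℕ} {F : List PTree} (h : Ok n m F) :
    (F.flatMap leaves).length = n := by
  rw [← List.toFinset_card_of_nodup h.2.2.1, h.2.2.2, Nat.card_Icc]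
  omega

theorem length_le_flatMap {F : List PTree} (h : ∀ T ∈ F, T.leaves ≠ []) :
    F.length ≤ (F.flatMap leaves).length := by
  induction F with
  | nil => simp
  | cons T G ih =>
    rw [List.flatMap_cons]
    simp only [List.length_append, List.length_cons]
    have h1 : T.leaves.length ≥ 1 := by
      have := h T (by simp)
      cases hl : T.leaves with
      | nil => exact absurd hl this
      | cons a l => simp
    have h2 := ih (fun U hU => h U (by simp [hU]))
    omega

theorem ok_m_le_n {n m : ℕ} {F : List PTree} (h : Ok n m F) : m ≤ n := by
  have h1 := length_le_flatMap (fun T hT => (h.2.1 T hT).2.2)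
  rw [h.1, ok_flatMap_length h] at h1
  exact h1

theorem allForests_eq_nil {n m : ℕ} (h : n < m) : allForests n m = [] := by
  rw [List.eq_nil_iff_forall_not_mem]
  intro F hF
  have := ok_m_le_n ((mem_allForests n m F).mp hF)
  omega

theorem length_allForests_succ (n m : ℕ) :
    (allForests (n+1) (m+1)).length =
      (allForests n (m+1)).length * (2*n - (m+1)) + (allForests n m).length * (m+1) := by
  rw [allForests, List.length_append, List.length_flatMap, List.length_flatMap]
  congr 1
  · refine sum_map_const' _ _ _ ?_
    intro F₀ hF₀
    have hOk := (mem_allForests n (m+1) F₀).mp hF₀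
    have h1 := length_graftF (x := n+1) (fun T hT => (hOk.2.1 T hT).1)
    rw [ok_flatMap_length hOk, hOk.1] at h1
    omega
  · refine sum_map_const' _ _ _ ?_
    intro F₀ hF₀
    have hOk := (mem_allForests n m F₀).mp hF₀
    rw [length_insF F₀, hOk.1]

theorem allForests_zero_right (k : ℕ) : allForests (k+1) 0 = [] := by rw [allForests]

theorem count_formula : ∀ n m : ℕ, 1 ≤ m → m ≤ n →
    (allForests n m).length * ((n - m).factorial * 2 ^ (n - m)) =
      (2 * n - m - 1).factorial * m := by
  intro n
  induction n with
  | zero => intro m h1 h2; omega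
  | succ n ihn =>
    intro m h1 h2
    match m, h1 with
    | m'+1, _ =>
      rw [length_allForests_succ]
      by_cases hcase : m' + 1 ≤ n
      · -- main case
        obtain ⟨a, rfl⟩ : ∃ a, n = m' + 1 + a := ⟨n - (m'+1), by omega⟩
        have H1 := ihn (m'+1) (by omega) (by omega)
        rw [show m' + 1 + a - (m'+1) = a from by omega,
          show 2 * (m'+1+a) - (m'+1) - 1 = m' + 2*a from by omega] at H1
        have H2 : (allForests (m'+1+a) m').length * ((a+1).factorial * 2 ^ (a+1)) =
            (m' + 2*a + 1).factorial * m' := by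
          match m', hcase with
          | 0, _ =>
            rw [show (0:ℕ)+1+a = a+1 from by omega, allForests_zero_right]
            simp
          | k+1, _ =>
            have := ihn (k+1) (by omega) (by omega)
            rw [show (k+1) + 1 + a - (k+1) = a + 1 from by omega,
              show 2 * ((k+1)+1+a) - (k+1) - 1 = (k+1) + 2*a + 1 from by omega] at this
            exact this
        rw [show m' + 1 + a + 1 - (m'+1) = a + 1 from by omega,
          show 2 * (m'+1+a+1) - (m'+1) - 1 = m' + 2*a + 2 from by omega,
          show 2 * (m'+1+a) - (m'+1) = m' + 1 + 2*a from by omega]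
        rw [show (m' + 2*a + 2).factorial = (m'+2*a+2) * ((m'+2*a+1) * (m'+2*a).factorial) from by
            rw [Nat.factorial_succ, Nat.factorial_succ],
          show (a+1).factorial = (a+1) * a.factorial from Nat.factorial_succ a,
          pow_succ] at *
        rw [show (m' + 2*a + 1).factorial = (m'+2*a+1) * (m'+2*a).factorial from
            Nat.factorial_succ _] at H2
        zify at H1 H2 ⊢
        linear_combination (2*((a:ℤ)+1)*(m'+1+2*a)) * H1 + ((m':ℤ)+1) * H2
      · -- m' + 1 = n + 1
        have hm : m' = n := by omega
        subst hm
        rw [allForests_eq_nil (by omega), List.length_nil, Nat.zero_mul, Nat.zero_add]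
        match m', h2 with
        | 0, _ =>
          have : (allForests 0 0).length = 1 := by rw [allForests]; rfl
          rw [this]
          simp [Nat.factorial]
        | k+1, _ =>
          have H := ihn (k+1) (by omega) (by omega)
          rw [show k + 1 - (k+1) = 0 from by omega,
            show 2 * (k+1) - (k+1) - 1 = k from by omega] at H
          simp only [Nat.factorial_zero, pow_zero, mul_one] at H
          rw [show k + 1 + 1 - (k+1+1) = 0 from by omega,
            show 2 * (k+1+1) - (k+1+1) - 1 = k + 1 from by omega]
          simp only [Nat.factorial_zero, pow_zero, mul_one]
          rw [H, Nat.factorial_succ]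
          ring

end PTree

theorem card_binary_forests (n m : ℕ) (h1 : 1 ≤ m) (hmn : m ≤ n) :
    {F : List PTree | F.length = m ∧
        (∀ T ∈ F, PTree.IsBinary T ∧ PTree.Canonical T ∧ T.leaves ≠ []) ∧
        (F.flatMap PTree.leaves).Nodup ∧
        (F.flatMap PTree.leaves).toFinset = Finset.Icc 1 n}.ncard *
      ((n - m).factorial * 2 ^ (n - m)) =
    (2 * n - m - 1).factorial * m := by
  have hset : {F : List PTree | F.length = m ∧
        (∀ T ∈ F, PTree.IsBinary T ∧ PTree.Canonical T ∧ T.leaves ≠ []) ∧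
        (F.flatMap PTree.leaves).Nodup ∧
        (F.flatMap PTree.leaves).toFinset = Finset.Icc 1 n} =
      ↑((PTree.allForests n m).toFinset) := by
    ext F
    simp only [Set.mem_setOf_eq, Finset.coe_sort_coe, Finset.mem_coe, List.mem_toFinset]
    exact (PTree.mem_allForests n m F).symm
  rw [hset, Set.ncard_coe_finset,
    List.toFinset_card_of_nodup (PTree.nodup_allForests n m)]
  exact PTree.count_formula n m h1 hmn
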